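/- arXiv:2109.04461 — 3 statements merged into one kernel-verified Lean document; each statement's English description precedes it below -/
import Mathlib

section
/- Let X, Y, Z be measurable spaces, π a probability measure on X, and c : X ⇝ Y, d : Y ⇝ Z Markov kernels. Suppose c' : Y ⇝ X is a Bayesian inversion of c with respect to π, and d' : Z ⇝ Y is a Bayesian inversion of d with respect to the pushforward c∘π. Then the Chapman–Kolmogorov composite kernel c' ∘ d' : Z ⇝ X is a Bayesian inversion of the composite kernel d ∘ c : X ⇝ Z with respect to π. -/
open MeasureTheory ProbabilityTheory

/-- The joint measure of the generative model `(π, c)` on `X × Y`: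
`(π ⊗ c)(E) = ∫ c(x)({y : (x,y) ∈ E}) dπ(x)`. -/
noncomputable def jointMeasure {X Y : Type*} [MeasurableSpace X] [MeasurableSpace Y]
    (π : Measure X) (c : Kernel X Y) : Measure (X × Y) :=
  π.bind (fun x => (c x).map (fun y => (x, y)))

/-- `c' : Y ⇝ X` is a Bayesian inversion of `c : X ⇝ Y` with respect to `π` if the joint
measure `π ⊗ c` equals the pushforward of `(c∘π) ⊗ c'` under the swap map. -/
def IsBayesianInversion {X Y : Type*} [MeasurableSpace X] [MeasurableSpace Y]
    (π : Measure X) (c : Kernel X Y) (c' : Kernel Y X) : Prop :=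
  jointMeasure π c = (jointMeasure (π.bind c) c').map Prod.swap

lemma measurable_jointFun {X Y : Type*} [MeasurableSpace X] [MeasurableSpace Y]
    (c : Kernel X Y) [IsSFiniteKernel c] : Measurable fun x => ((c x).map (fun y => (x, y))) := by
  apply Measure.measurable_of_measurable_coe
  intro s hs
  simp_rw [Measure.map_apply measurable_prodMk_left hs]
  exact Kernel.measurable_kernel_prodMk_left hs

lemma jointMeasure_eq_compProd {X Y : Type*} [MeasurableSpace X] [MeasurableSpace Y]
    (π : Measure X) [SFinite π] (c : Kernel X Y) [IsSFiniteKernel c] :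
    jointMeasure π c = π ⊗ₘ c := by
  ext s hs
  rw [jointMeasure, Measure.bind_apply hs (measurable_jointFun c).aemeasurable,
    Measure.compProd_apply hs]
  congr 1 with x
  rw [Measure.map_apply measurable_prodMk_left hs]

lemma isProbabilityMeasure_bind {X Y : Type*} [MeasurableSpace X] [MeasurableSpace Y]
    (π : Measure X) [IsProbabilityMeasure π] (c : Kernel X Y) [IsMarkovKernel c] :
    IsProbabilityMeasure (π.bind ⇑c) := by
  constructor
  rw [Measure.bind_apply MeasurableSet.univ c.measurable.aemeasurable]
  simp


/-- Bayesian inversions compose according to the lens pattern: if `c'` inverts `c` w.r.t. `π`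
and `d'` inverts `d` w.r.t. `c∘π`, then the Chapman–Kolmogorov composite `c' ∘ d'` is a
Bayesian inversion of `d ∘ c` w.r.t. `π`. -/
theorem bayesian_inversion_comp
    {X Y Z : Type*} [MeasurableSpace X] [MeasurableSpace Y] [MeasurableSpace Z]
    (π : Measure X) [IsProbabilityMeasure π]
    (c : Kernel X Y) [IsMarkovKernel c] (d : Kernel Y Z) [IsMarkovKernel d]
    (c' : Kernel Y X) [IsMarkovKernel c'] (d' : Kernel Z Y) [IsMarkovKernel d']
    (hc : IsBayesianInversion π c c')
    (hd : IsBayesianInversion (π.bind c) d d') :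
    IsBayesianInversion π (d ∘ₖ c) (c' ∘ₖ d') := by
  haveI hν : IsProbabilityMeasure (π.bind ⇑c) := isProbabilityMeasure_bind π c
  haveI hμZ : IsProbabilityMeasure ((π.bind ⇑c).bind ⇑d) := isProbabilityMeasure_bind _ d
  set ν := π.bind ⇑c with hνdef
  set μZ := ν.bind ⇑d with hμZdef
  have hbind : π.bind ⇑(d ∘ₖ c) = μZ := by
    rw [hμZdef, hνdef, Measure.bind_bind c.measurable.aemeasurable d.measurable.aemeasurable]
    exact congrArg _ (funext fun x => Kernel.comp_apply d c x)
  unfold IsBayesianInversion at hc hd ⊢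
  rw [hbind]
  rw [jointMeasure_eq_compProd, jointMeasure_eq_compProd] at hc
  rw [jointMeasure_eq_compProd, jointMeasure_eq_compProd] at hd
  rw [jointMeasure_eq_compProd, jointMeasure_eq_compProd]
  have hd2 : μZ ⊗ₘ d' = (ν ⊗ₘ d).map Prod.swap := by
    rw [hd, Measure.map_map measurable_swap measurable_swap, Prod.swap_swap_eq,
      Measure.map_id]
  ext E hE
  -- measurable integrands
  have hf : Measurable fun p : X × Y => d p.2 (Prod.mk p.1 ⁻¹' E) := by
    have hE' : MeasurableSet {q : (X × Y) × Z | (q.1.1, q.2) ∈ E} :=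
      (measurable_fst.fst.prodMk measurable_snd) hE
    have := Kernel.measurable_kernel_prodMk_left
      (κ := d.comap Prod.snd measurable_snd) hE'
    exact this
  have hg : Measurable fun q : Z × Y => c' q.2 ((fun x => (x, q.1)) ⁻¹' E) := by
    have hE' : MeasurableSet {q : (Z × Y) × X | (q.2, q.1.1) ∈ E} :=
      (measurable_snd.prodMk measurable_fst.fst) hE
    have := Kernel.measurable_kernel_prodMk_left
      (κ := c'.comap Prod.snd measurable_snd) hE'
    exact this
  calc (π ⊗ₘ (d ∘ₖ c)) E
      = ∫⁻ x, (d ∘ₖ c) x (Prod.mk x ⁻¹' E) ∂π := Measure.compProd_apply hE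
    _ = ∫⁻ x, ∫⁻ y, d y (Prod.mk x ⁻¹' E) ∂(c x) ∂π := by
        refine lintegral_congr fun x => ?_
        exact Kernel.comp_apply' d c x (measurable_prodMk_left hE)
    _ = ∫⁻ p : X × Y, d p.2 (Prod.mk p.1 ⁻¹' E) ∂(π ⊗ₘ c) :=
        (Measure.lintegral_compProd hf).symm
    _ = ∫⁻ p : X × Y, d p.2 (Prod.mk p.1 ⁻¹' E) ∂((ν ⊗ₘ c').map Prod.swap) := by rw [hc]
    _ = ∫⁻ q : Y × X, d q.1 (Prod.mk q.2 ⁻¹' E) ∂(ν ⊗ₘ c') :=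
        lintegral_map hf measurable_swap
    _ = ∫⁻ y, ∫⁻ x, d y (Prod.mk x ⁻¹' E) ∂(c' y) ∂ν :=
        Measure.lintegral_compProd (hf.comp measurable_swap)
    _ = ∫⁻ y, ((c' y).prod (d y)) E ∂ν :=
        lintegral_congr fun y => (Measure.prod_apply hE).symm
    _ = ∫⁻ y, ∫⁻ z, c' y ((fun x => (x, z)) ⁻¹' E) ∂(d y) ∂ν :=
        lintegral_congr fun y => Measure.prod_apply_symm hE
    _ = ∫⁻ p : Y × Z, c' p.1 ((fun x => (x, p.2)) ⁻¹' E) ∂(ν ⊗ₘ d) :=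
        (Measure.lintegral_compProd (hg.comp measurable_swap)).symm
    _ = ∫⁻ q : Z × Y, c' q.2 ((fun x => (x, q.1)) ⁻¹' E) ∂((ν ⊗ₘ d).map Prod.swap) :=
        (lintegral_map hg measurable_swap).symm
    _ = ∫⁻ q : Z × Y, c' q.2 ((fun x => (x, q.1)) ⁻¹' E) ∂(μZ ⊗ₘ d') := by rw [hd2]
    _ = ∫⁻ z, ∫⁻ y, c' y ((fun x => (x, z)) ⁻¹' E) ∂(d' z) ∂μZ :=
        Measure.lintegral_compProd hg
    _ = ∫⁻ z, (c' ∘ₖ d') z ((fun x => (x, z)) ⁻¹' E) ∂μZ := by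
        refine lintegral_congr fun z => ?_
        exact (Kernel.comp_apply' c' d' z (measurable_prodMk_right hE)).symm
    _ = ∫⁻ z, (c' ∘ₖ d') z (Prod.mk z ⁻¹' (Prod.swap ⁻¹' E)) ∂μZ := rfl
    _ = (μZ ⊗ₘ (c' ∘ₖ d')) (Prod.swap ⁻¹' E) :=
        (Measure.compProd_apply (measurable_swap hE)).symm
    _ = ((μZ ⊗ₘ (c' ∘ₖ d')).map Prod.swap) E :=
        (Measure.map_apply measurable_swap hE).symm
end

section
/- Let X, Y, Z be measurable spaces, π a probability measure on X, and c : X ⇝ Y, d : Y ⇝ Z Markov kernels. Suppose c' : Y ⇝ X is a Bayesian inversion of c with respect to π, d' : Z ⇝ Y is a Bayesian inversion of d with respect to c∘π, and e : Z ⇝ X is any Bayesian inversion of the composite d ∘ c with respect to π. Then e is ((d∘c)∘π)-almost-equal to the composite c' ∘ d'; that is, Bayesian updates compose optically: ((d∘c)∘π) ⊗ e = ((d∘c)∘π) ⊗ (c' ∘ d'). -/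
open MeasureTheory ProbabilityTheory

section Helpers

variable {α β γ : Type*} [MeasurableSpace α] [MeasurableSpace β] [MeasurableSpace γ]

private lemma measure_map_bind (m : Measure α) {f : α → Measure β} (hf : Measurable f)
    {g : β → γ} (hg : Measurable g) :
    (m.bind f).map g = m.bind (fun a => (f a).map g) := by
  have hdg : Measurable fun b => Measure.dirac (g b) := Measure.measurable_dirac.comp hg
  rw [← Measure.bind_dirac_eq_map (m.bind f) hg, Measure.bind_bind hf.aemeasurable hdg.aemeasurable]
  simp_rw [Measure.bind_dirac_eq_map _ hg]

private lemma measure_bind_map (m : Measure α) {h : α → β} (hh : Measurable h)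
    {g : β → Measure γ} (hg : Measurable g) :
    (m.map h).bind g = m.bind (g ∘ h) := by
  rw [Measure.bind, Measure.bind, Measure.map_map hg hh]

private lemma meas_mk (κ : Kernel α β) [IsMarkovKernel κ] :
    Measurable fun a => (κ a).map (Prod.mk a) := by
  have h : (fun a => (κ a).map (Prod.mk a)) = ⇑(Kernel.id ×ₖ κ) := by
    funext a
    rw [Kernel.prod_apply, Kernel.id_apply, Measure.dirac_prod]
  rw [h]
  exact Kernel.measurable _

private lemma meas_mk2 (η : Kernel β γ) [IsMarkovKernel η] :
    Measurable fun p : α × β => (η p.2).map (Prod.mk p.1) := by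
  have h : (fun p : α × β => (η p.2).map (Prod.mk p.1))
      = ⇑((Kernel.deterministic (Prod.fst : α × β → α) measurable_fst) ×ₖ
          (Kernel.prodMkLeft α η)) := by
    funext p
    rw [Kernel.prod_apply, Kernel.deterministic_apply, Kernel.prodMkLeft_apply,
      Measure.dirac_prod]
  rw [h]
  exact Kernel.measurable _

private lemma meas_prodk (κ : Kernel α β) (η : Kernel α γ) [IsMarkovKernel κ] [IsMarkovKernel η] :
    Measurable fun a => (κ a).prod (η a) := by
  have h : (fun a => (κ a).prod (η a)) = ⇑(κ ×ₖ η) := by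
    funext a; rw [Kernel.prod_apply]
  rw [h]
  exact Kernel.measurable _

private lemma double_swap (m : Measure (α × β)) :
    (m.map Prod.swap).map Prod.swap = m := by
  rw [Measure.map_map measurable_swap measurable_swap]
  simp

end Helpers

/-- Bayesian updates compose optically: any Bayesian inversion `e` of the composite `d ∘ c`
w.r.t. `π` is `((d∘c)∘π)`-almost-equal to the lens composite `c' ∘ d'` of the component
inversions. -/
theorem bayesian_updates_compose_optically
    {X Y Z : Type*} [MeasurableSpace X] [MeasurableSpace Y] [MeasurableSpace Z]
    (π : Measure X) [IsProbabilityMeasure π]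
    (c : Kernel X Y) [IsMarkovKernel c] (d : Kernel Y Z) [IsMarkovKernel d]
    (c' : Kernel Y X) [IsMarkovKernel c'] (d' : Kernel Z Y) [IsMarkovKernel d']
    (e : Kernel Z X) [IsMarkovKernel e]
    (hc : IsBayesianInversion π c c')
    (hd : IsBayesianInversion (π.bind c) d d')
    (he : IsBayesianInversion π (d ∘ₖ c) e) :
    jointMeasure (π.bind (d ∘ₖ c)) e = jointMeasure (π.bind (d ∘ₖ c)) (c' ∘ₖ d') := by
  set ν : Measure Y := π.bind ⇑c with hν
  have hμ : π.bind ⇑(d ∘ₖ c) = ν.bind ⇑d := by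
    have h1 : ⇑(d ∘ₖ c) = fun x => (c x).bind ⇑d := funext fun x => Kernel.comp_apply d c x
    rw [h1, hν, Measure.bind_bind c.measurable.aemeasurable d.measurable.aemeasurable]
  -- key1 : the joint of (π, d ∘ c)
  have key1 : jointMeasure π (d ∘ₖ c) = ν.bind (fun y => (c' y).prod (d y)) := by
    calc jointMeasure π (d ∘ₖ c)
        = π.bind (fun x => ((c x).bind ⇑d).map (Prod.mk x)) := by
          unfold jointMeasure; simp_rw [Kernel.comp_apply]
      _ = π.bind (fun x => (c x).bind (fun y => (d y).map (Prod.mk x))) := by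
          congr 1; funext x
          exact measure_map_bind _ d.measurable measurable_prodMk_left
      _ = π.bind (fun x => ((c x).map (Prod.mk x)).bind
            (fun p : X × Y => (d p.2).map (Prod.mk p.1))) := by
          congr 1; funext x
          exact (measure_bind_map _ measurable_prodMk_left (meas_mk2 d)).symm
      _ = (jointMeasure π c).bind (fun p : X × Y => (d p.2).map (Prod.mk p.1)) := by
          unfold jointMeasure
          exact (Measure.bind_bind (meas_mk c).aemeasurable (meas_mk2 d).aemeasurable).symm
      _ = ((jointMeasure ν c').map Prod.swap).bind
            (fun p : X × Y => (d p.2).map (Prod.mk p.1)) := by rw [hc]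
      _ = (jointMeasure ν c').bind (fun q : Y × X => (d q.1).map (Prod.mk q.2)) := by
          rw [measure_bind_map _ measurable_swap (meas_mk2 d)]; rfl
      _ = ν.bind (fun y => ((c' y).map (Prod.mk y)).bind
            (fun q : Y × X => (d q.1).map (Prod.mk q.2))) := by
          unfold jointMeasure
          exact Measure.bind_bind (meas_mk c').aemeasurable ((meas_mk2 d).comp measurable_swap).aemeasurable
      _ = ν.bind (fun y => (c' y).bind (fun x => (d y).map (Prod.mk x))) := by
          congr 1; funext y
          exact measure_bind_map _ measurable_prodMk_left
            ((meas_mk2 d).comp measurable_swap)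
      _ = ν.bind (fun y => (c' y).prod (d y)) := by
          congr 1; funext y; rw [Measure.prod_def]
  -- key2 : the joint of (μ, c' ∘ d')
  have hd' : jointMeasure (ν.bind ⇑d) d' = (jointMeasure ν d).map Prod.swap := by
    rw [hd, double_swap]
  have key2 : jointMeasure (π.bind ⇑(d ∘ₖ c)) (c' ∘ₖ d')
      = ν.bind (fun y => (d y).prod (c' y)) := by
    calc jointMeasure (π.bind ⇑(d ∘ₖ c)) (c' ∘ₖ d')
        = (ν.bind ⇑d).bind (fun z => ((d' z).bind ⇑c').map (Prod.mk z)) := by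
          rw [hμ]; unfold jointMeasure; simp_rw [Kernel.comp_apply]
      _ = (ν.bind ⇑d).bind (fun z => (d' z).bind (fun y => (c' y).map (Prod.mk z))) := by
          congr 1; funext z
          exact measure_map_bind _ c'.measurable measurable_prodMk_left
      _ = (ν.bind ⇑d).bind (fun z => ((d' z).map (Prod.mk z)).bind
            (fun q : Z × Y => (c' q.2).map (Prod.mk q.1))) := by
          congr 1; funext z
          exact (measure_bind_map _ measurable_prodMk_left (meas_mk2 c')).symm
      _ = (jointMeasure (ν.bind ⇑d) d').bind
            (fun q : Z × Y => (c' q.2).map (Prod.mk q.1)) := by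
          unfold jointMeasure
          exact (Measure.bind_bind (meas_mk d').aemeasurable (meas_mk2 c').aemeasurable).symm
      _ = ((jointMeasure ν d).map Prod.swap).bind
            (fun q : Z × Y => (c' q.2).map (Prod.mk q.1)) := by rw [hd']
      _ = (jointMeasure ν d).bind (fun p : Y × Z => (c' p.1).map (Prod.mk p.2)) := by
          rw [measure_bind_map _ measurable_swap (meas_mk2 c')]; rfl
      _ = ν.bind (fun y => ((d y).map (Prod.mk y)).bind
            (fun p : Y × Z => (c' p.1).map (Prod.mk p.2))) := by
          unfold jointMeasure
          exact Measure.bind_bind (meas_mk d).aemeasurable ((meas_mk2 c').comp measurable_swap).aemeasurable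
      _ = ν.bind (fun y => (d y).bind (fun z => (c' y).map (Prod.mk z))) := by
          congr 1; funext y
          exact measure_bind_map _ measurable_prodMk_left
            ((meas_mk2 c').comp measurable_swap)
      _ = ν.bind (fun y => (d y).prod (c' y)) := by
          congr 1; funext y; rw [Measure.prod_def]
  have hLHS : jointMeasure (π.bind ⇑(d ∘ₖ c)) e = (jointMeasure π (d ∘ₖ c)).map Prod.swap := by
    rw [he, double_swap]
  rw [hLHS, key1, key2,
    measure_map_bind _ (meas_prodk c' d) measurable_swap]
  congr 1; funext y
  exact Measure.prod_swap
end

section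
/- Let X, Y be measurable spaces, μ a σ-finite measure on Y, π a probability measure on X, and c : X ⇝ Y a Markov kernel represented by a density p_c with respect to μ. Define N : Y → [0,∞] by N(y) = ∫ p_c(y|x) dπ(x), and suppose 0 < N(y) < ∞ for (c∘π)-almost every y. Then the assignment sending y with 0 < N(y) < ∞ to the probability measure A ↦ N(y)⁻¹ ∫_A p_c(y|x) dπ(x) on X (and sending any other y to π) defines a Markov kernel c† : Y ⇝ X, and c† is a Bayesian inversion of c with respect to π. -/
open MeasureTheory ProbabilityTheory
open scoped ENNReal

section Aux

variable {X Y : Type*} [MeasurableSpace X] [MeasurableSpace Y]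

lemma measurable_bindFun (c : Kernel X Y) [IsSFiniteKernel c] :
    Measurable (fun x => (c x).map (fun y => (x, y))) := by
  apply Measure.measurable_of_measurable_coe
  intro s hs
  simp only [Measure.map_apply measurable_prodMk_left hs]
  exact Kernel.measurable_kernel_prodMk_left hs

lemma jointMeasure_apply (π : Measure X) (c : Kernel X Y) [IsSFiniteKernel c]
    {A : Set X} {B : Set Y} (hA : MeasurableSet A) (hB : MeasurableSet B) :
    jointMeasure π c (A ×ˢ B) = ∫⁻ x in A, c x B ∂π := by
  rw [jointMeasure, Measure.bind_apply (hA.prod hB) (measurable_bindFun c).aemeasurable]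
  rw [← lintegral_indicator hA]
  congr 1
  ext x
  rw [Measure.map_apply measurable_prodMk_left (hA.prod hB)]
  by_cases hx : x ∈ A
  · rw [Set.mk_preimage_prod_right hx, Set.indicator_of_mem hx]
  · rw [Set.mk_preimage_prod_right_eq_empty hx, Set.indicator_of_notMem hx, measure_empty]

lemma jointMeasure_univ (m : Measure X) [IsProbabilityMeasure m]
    (k : Kernel X Y) [IsMarkovKernel k] :
    jointMeasure m k Set.univ = 1 := by
  rw [jointMeasure, Measure.bind_apply MeasurableSet.univ (measurable_bindFun k).aemeasurable]
  simp [Measure.map_apply measurable_prodMk_left MeasurableSet.univ, measure_univ]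

end Aux

/-- For a channel `c` represented by a density `p_c` with respect to a σ-finite measure `μ`,
with normalizer `N(y) = ∫ p_c(y|x) dπ(x)` nontrivial `(c∘π)`-almost everywhere, the
assignment `y ↦ N(y)⁻¹ ∫_{-} p_c(y|x) dπ(x)` (defaulting to `π` where the normalizer is
degenerate) defines a Markov kernel which is a Bayesian inversion of `c` w.r.t. `π`. -/
theorem bayesian_inversion_exists_of_density
    {X Y : Type*} [MeasurableSpace X] [MeasurableSpace Y]
    (μ : Measure Y) [SigmaFinite μ]
    (π : Measure X) [IsProbabilityMeasure π]
    (c : Kernel X Y) [IsMarkovKernel c]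
    (p : X → Y → ℝ≥0∞) (hp : Measurable (Function.uncurry p))
    (hrep : ∀ x, ∀ B, MeasurableSet B → c x B = ∫⁻ y in B, p x y ∂μ)
    (N : Y → ℝ≥0∞) (hN : N = fun y => ∫⁻ x, p x y ∂π)
    (hNae : ∀ᵐ y ∂(π.bind c), 0 < N y ∧ N y < ⊤) :
    ∃ cInv : Kernel Y X, IsMarkovKernel cInv ∧
      (⇑cInv = fun y =>
        if 0 < N y ∧ N y < ⊤ then (N y)⁻¹ • π.withDensity (fun x => p x y) else π) ∧
      IsBayesianInversion π c cInv := by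
  classical
  have hNm : Measurable N := by
    rw [hN]; exact Measurable.lintegral_prod_left hp
  have hPeq : {y | 0 < N y ∧ N y < ⊤} = N ⁻¹' Set.Ioo 0 ⊤ := rfl
  have hPm : MeasurableSet {y | 0 < N y ∧ N y < ⊤} := by
    rw [hPeq]; exact hNm measurableSet_Ioo
  -- the candidate kernel as a function
  set f : Y → Measure X := fun y =>
    if 0 < N y ∧ N y < ⊤ then (N y)⁻¹ • π.withDensity (fun x => p x y) else π with hf
  have hfapp : ∀ y, ∀ A : Set X, MeasurableSet A →
      f y A = if 0 < N y ∧ N y < ⊤ then (N y)⁻¹ * ∫⁻ x in A, p x y ∂π else π A := by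
    intro y A hA
    by_cases h : 0 < N y ∧ N y < ⊤
    · simp only [hf, if_pos h, Measure.smul_apply, smul_eq_mul,
        withDensity_apply _ hA]
    · simp only [hf, if_neg h]
  have hint : ∀ A : Set X, MeasurableSet A →
      Measurable (fun y => ∫⁻ x in A, p x y ∂π) := by
    intro A hA
    exact Measurable.lintegral_prod_left (μ := π.restrict A) hp
  have hfm : Measurable f := by
    apply Measure.measurable_of_measurable_coe
    intro A hA
    have : (fun y => f y A) = fun y =>
        if 0 < N y ∧ N y < ⊤ then (N y)⁻¹ * ∫⁻ x in A, p x y ∂π else π A := by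
      ext y; exact hfapp y A hA
    rw [this]
    exact Measurable.ite hPm (hNm.inv.mul (hint A hA)) measurable_const
  set cInv : Kernel Y X := ⟨f, hfm⟩ with hcInv
  have hcInvapp : ∀ y, cInv y = f y := fun _ => rfl
  have hMarkov : IsMarkovKernel cInv := by
    constructor
    intro y
    constructor
    show f y Set.univ = 1
    rw [hfapp y Set.univ MeasurableSet.univ]
    by_cases h : 0 < N y ∧ N y < ⊤
    · rw [if_pos h, Measure.restrict_univ]
      have hNy : ∫⁻ x, p x y ∂π = N y := by rw [hN]
      rw [hNy]
      exact ENNReal.inv_mul_cancel h.1.ne' h.2.ne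
    · rw [if_neg h]; exact measure_univ
  haveI := hMarkov
  refine ⟨cInv, hMarkov, rfl, ?_⟩
  set ρ : Measure Y := π.bind c with hρ
  have hρeq : ρ = μ.withDensity N := by
    ext B hB
    rw [hρ, Measure.bind_apply hB c.measurable.aemeasurable, withDensity_apply _ hB]
    calc ∫⁻ x, c x B ∂π = ∫⁻ x, ∫⁻ y in B, p x y ∂μ ∂π := by
          apply lintegral_congr; intro x; exact hrep x B hB
      _ = ∫⁻ y in B, ∫⁻ x, p x y ∂π ∂μ :=
          lintegral_lintegral_swap (hp.aemeasurable.mono_ac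
            (Measure.AbsolutelyContinuous.rfl.prod Measure.restrict_le_self.absolutelyContinuous))
      _ = ∫⁻ y in B, N y ∂μ := by rw [hN]
  -- a.e. (μ) : N y = 0 or the good case
  have hμae : ∀ᵐ y ∂μ, N y ≠ 0 → (0 < N y ∧ N y < ⊤) := by
    rw [hρeq] at hNae
    exact (ae_withDensity_iff hNm).mp hNae
  have hIsProbρ : IsProbabilityMeasure ρ := by
    constructor
    rw [hρ, Measure.bind_apply MeasurableSet.univ c.measurable.aemeasurable]
    simp [measure_univ]
  haveI := hIsProbρ
  haveI : IsFiniteMeasure (jointMeasure π c) :=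
    ⟨by rw [jointMeasure_univ π c]; exact ENNReal.one_lt_top⟩
  -- main rectangle computation
  unfold IsBayesianInversion
  refine ext_of_generate_finite _ generateFrom_prod.symm isPiSystem_prod ?_ ?_
  · rintro s ⟨A, hA, B, hB, rfl⟩
    simp only [Set.mem_setOf_eq] at hA hB
    have hswap : (jointMeasure ρ cInv).map Prod.swap (A ×ˢ B) =
        jointMeasure ρ cInv (B ×ˢ A) := by
      rw [Measure.map_apply measurable_swap (hA.prod hB)]
      congr 1
      ext z
      simp [Set.mem_prod, and_comm]
    rw [show π.bind ⇑c = ρ from rfl, hswap, jointMeasure_apply π c hA hB,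
      jointMeasure_apply ρ cInv hB hA]
    have hL : ∫⁻ x in A, c x B ∂π = ∫⁻ y in B, ∫⁻ x in A, p x y ∂π ∂μ := by
      calc ∫⁻ x in A, c x B ∂π = ∫⁻ x in A, ∫⁻ y in B, p x y ∂μ ∂π := by
            apply lintegral_congr; intro x; exact hrep x B hB
        _ = ∫⁻ y in B, ∫⁻ x in A, p x y ∂π ∂μ :=
            lintegral_lintegral_swap (hp.aemeasurable.mono_ac
              ((Measure.restrict_le_self.absolutelyContinuous).prod
                Measure.restrict_le_self.absolutelyContinuous))
    have hR : ∫⁻ y in B, cInv y A ∂ρ = ∫⁻ y in B, ∫⁻ x in A, p x y ∂π ∂μ := by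
      rw [hρeq, restrict_withDensity hB,
        lintegral_withDensity_eq_lintegral_mul _ hNm (Kernel.measurable_coe cInv hA)]
      apply lintegral_congr_ae
      apply ae_restrict_of_ae
      filter_upwards [hμae] with y hy
      by_cases h0 : N y = 0
      · have hle : ∫⁻ x in A, p x y ∂π ≤ N y := by
          rw [hN]
          exact (lintegral_mono_set (Set.subset_univ A)).trans_eq
            (by rw [Measure.restrict_univ])
        have hz : ∫⁻ x in A, p x y ∂π = 0 := le_antisymm (hle.trans_eq h0) (zero_le)
        simp [Pi.mul_apply, h0, hz]
      · have h := hy h0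
        rw [Pi.mul_apply, hcInvapp, hfapp y A hA, if_pos h, ← mul_assoc,
          ENNReal.mul_inv_cancel h.1.ne' h.2.ne, one_mul]
    rw [hL, hR]
  · rw [jointMeasure_univ π c,
      Measure.map_apply measurable_swap MeasurableSet.univ]
    simp only [Set.preimage_univ]
    rw [show π.bind ⇑c = ρ from rfl, jointMeasure_univ ρ cInv]
end
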